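/- Let E be a real normed vector space, let f : E → ℝ be concave, let x* ∈ E, δ > 0, and α ∈ ℝ. Assume f(v) ≤ f(x*) − α for every v ∈ E with ‖v − x*‖ = δ. Then for every z ∈ E with ‖z − x*‖ ≥ δ, f(z) ≤ f(x*) − (α/δ)·‖z − x*‖. -/

import Mathlib

/-- Extension step in Lemma 7: if a concave `f` satisfies `f v ≤ f x* − α` on the sphere
of radius `δ` around `x*`, then `f z ≤ f x* − (α/δ)·‖z − x*‖` for all `z` with
`‖z − x*‖ ≥ δ`. -/
theorem concave_gap_extends_linearly
    {E : Type*} [NormedAddCommGroup E] [NormedSpace ℝ E]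
    (f : E → ℝ) (hconc : ConcaveOn ℝ Set.univ f)
    (xstar : E) (δ α : ℝ) (hδ : 0 < δ)
    (hsphere : ∀ v : E, ‖v - xstar‖ = δ → f v ≤ f xstar - α) :
    ∀ z : E, δ ≤ ‖z - xstar‖ → f z ≤ f xstar - (α / δ) * ‖z - xstar‖ := by
  intro z hz
  set r := ‖z - xstar‖ with hr
  have hrpos : 0 < r := lt_of_lt_of_le hδ hz
  set ρ := δ / r with hρ
  have hρpos : 0 < ρ := div_pos hδ hrpos
  have hρle : ρ ≤ 1 := (div_le_one hrpos).2 hz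
  set v := (1 - ρ) • xstar + ρ • z with hv
  have hvx : v - xstar = ρ • (z - xstar) := by
    rw [hv]
    module
  have hvnorm : ‖v - xstar‖ = δ := by
    rw [hvx, norm_smul, Real.norm_of_nonneg hρpos.le, ← hr, hρ,
      div_mul_cancel₀ _ hrpos.ne']
  have hconcv : (1 - ρ) * f xstar + ρ * f z ≤ f v := by
    have := hconc.2 (Set.mem_univ xstar) (Set.mem_univ z)
      (by linarith : (0:ℝ) ≤ 1 - ρ) hρpos.le (by ring)
    simpa [hv] using this
  have hfv : f v ≤ f xstar - α := hsphere v hvnorm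
  have key : ρ * f z ≤ ρ * f xstar - α := by nlinarith
  have h2 : f z ≤ f xstar - α / ρ := by
    rw [← mul_le_mul_iff_right₀ hρpos]
    have h3 : ρ * (f xstar - α / ρ) = ρ * f xstar - α := by field_simp
    linarith
  calc f z ≤ f xstar - α / ρ := h2
    _ = f xstar - (α / δ) * r := by rw [hρ]; field_simp
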